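/- For every n ≥ 9 and every c with 3 ≤ c < n/2, the following c-edge-coloured multigraph on n vertices is connected, has exactly c·(n-2 choose 2) + n − 1 edges, and has no proper Hamiltonian path: take a rainbow complete c-edge-coloured multigraph A on n−2 vertices, add two new vertices x and y, and, all in one fixed colour, add the edge xy together with an edge from y to every vertex of A. -/

import Mathlib

/-!  A `c`-edge-coloured multigraph on a vertex type `V` is modelled as a family
`G : Fin c → SimpleGraph V`, where `G i` is the simple graph formed by the edges
of colour `i` (no two parallel edges of the same colour). -/

/-- Total number of edges of a `c`-edge-coloured multigraph: the sum of the
numbers of edges of the colour classes. -/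
noncomputable def numEdges {V : Type*} {c : ℕ} (G : Fin c → SimpleGraph V) : ℕ :=
  ∑ i : Fin c, (G i).edgeSet.ncard

/-- The rainbow degree of a vertex: the number of distinct colours appearing on
edges incident to it. -/
noncomputable def rainbowDeg {V : Type*} {c : ℕ} (G : Fin c → SimpleGraph V) (x : V) : ℕ :=
  {i : Fin c | ∃ y, (G i).Adj x y}.ncard

/-- The rainbow degree of the multigraph: the minimum rainbow degree over all vertices. -/
noncomputable def minRainbowDeg {V : Type*} {c : ℕ} (G : Fin c → SimpleGraph V) : ℕ :=
  sInf (Set.range (rainbowDeg G))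

/-- The total degree of a vertex: the number of edges incident to it, over all colours. -/
noncomputable def totalDeg {V : Type*} {c : ℕ} (G : Fin c → SimpleGraph V) (x : V) : ℕ :=
  ∑ i : Fin c, ((G i).neighborSet x).ncard

/-- `v 0, v 1, …, v (m-1)`, with edge `k` (joining `v k` and `v (k+1)`) taken in colour
`κ k`, is a proper path on `m` (distinct) vertices: consecutive edges get distinct
colours. -/
def IsProperPathOn {V : Type*} {c : ℕ} (G : Fin c → SimpleGraph V) (m : ℕ)
    (v : ℕ → V) (κ : ℕ → Fin c) : Prop :=
  Set.InjOn v (Set.Iio m) ∧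
  (∀ i, i + 1 < m → (G (κ i)).Adj (v i) (v (i + 1))) ∧
  (∀ i, i + 2 < m → κ i ≠ κ (i + 1))

/-- `G` has a proper Hamiltonian path: a proper path through all the vertices. -/
def HasProperHamPath {V : Type*} [Fintype V] {c : ℕ} (G : Fin c → SimpleGraph V) : Prop :=
  ∃ (v : ℕ → V) (κ : ℕ → Fin c),
    IsProperPathOn G (Fintype.card V) v κ ∧ ∀ x : V, ∃ i < Fintype.card V, v i = x

/-- `G` has a proper cycle whose vertex set is exactly `S`. -/
def HasProperCycleOn {V : Type*} {c : ℕ} (G : Fin c → SimpleGraph V) (S : Set V) : Prop :=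
  ∃ (m : ℕ) (w : ZMod m → V) (μ : ZMod m → Fin c),
    3 ≤ m ∧ Function.Injective w ∧ Set.range w = S ∧
    (∀ i, (G (μ i)).Adj (w i) (w (i + 1))) ∧
    (∀ i, μ i ≠ μ (i + 1))

/-- A proper path `x_1 y_1 x_2 y_2 … x_q y_q` (on `2q` vertices) compatible with a
set `M` of red edges: its edges are alternately in `M` (these being red) and not
in `M`, beginning and ending with an edge of `M`. -/
def IsCompatiblePath {V : Type*} {c : ℕ} (G : Fin c → SimpleGraph V) (red : Fin c)
    (M : Set (Sym2 V)) (q : ℕ) (w : ℕ → V) (μ : ℕ → Fin c) : Prop :=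
  IsProperPathOn G (2 * q) w μ ∧
  (∀ j, j < q → μ (2 * j) = red ∧ s(w (2 * j), w (2 * j + 1)) ∈ M) ∧
  (∀ j, j + 1 < q → s(w (2 * j + 1), w (2 * j + 2)) ∉ M)

open SimpleGraph in
lemma myEdgeSetMap {V W : Type*} (f : V ↪ W) (G : SimpleGraph V) :
    (G.map f).edgeSet = Sym2.map f '' G.edgeSet := by
  ext e
  induction e using Sym2.ind with
  | _ a b =>
    simp only [SimpleGraph.mem_edgeSet, SimpleGraph.map_adj, Set.mem_image]
    constructor
    · rintro ⟨u, v, huv, rfl, rfl⟩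
      exact ⟨s(u, v), huv, Sym2.map_pair_eq f u v⟩
    · rintro ⟨e', he', hmap⟩
      induction e' using Sym2.ind with
      | _ p q =>
        rw [Sym2.map_pair_eq] at hmap
        rcases Sym2.eq_iff.mp hmap with ⟨h1, h2⟩ | ⟨h1, h2⟩
        · exact ⟨p, q, he', h1, h2⟩
        · exact ⟨q, p, (SimpleGraph.mem_edgeSet ..).mp (by rwa [Sym2.eq_swap] at he'), h2, h1⟩

open SimpleGraph in
lemma topEdgeSetNcard (m : ℕ) : ((⊤ : SimpleGraph (Fin m)).edgeSet).ncard = m.choose 2 := by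
  rw [← Nat.card_coe_set_eq, Nat.card_eq_fintype_card, ← SimpleGraph.edgeFinset_card,
    SimpleGraph.card_edgeFinset_top_eq_card_choose_two, Fintype.card_fin]

open SimpleGraph in
lemma ncardK (n : ℕ) (h9 : 9 ≤ n) :
    (SimpleGraph.fromRel (fun (u v : Fin n) => 2 ≤ (u : ℕ) ∧ 2 ≤ (v : ℕ))).edgeSet.ncard
      = (n - 2).choose 2 := by
  have hg : Function.Injective (fun k : Fin (n - 2) => (⟨k.val + 2, by omega⟩ : Fin n)) := by
    intro a b h
    simp only [Fin.mk.injEq] at h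
    exact Fin.ext (by omega)
  set g : Fin (n - 2) ↪ Fin n := ⟨fun k => ⟨k.val + 2, by omega⟩, hg⟩ with hgdef
  have hiso : SimpleGraph.fromRel (fun (u v : Fin n) => 2 ≤ (u : ℕ) ∧ 2 ≤ (v : ℕ))
      = (⊤ : SimpleGraph (Fin (n - 2))).map g := by
    ext a b
    simp only [SimpleGraph.fromRel_adj, SimpleGraph.map_adj, top_adj, hgdef,
      Function.Embedding.coeFn_mk]
    constructor
    · rintro ⟨hab, h⟩
      have h2 : 2 ≤ (a : ℕ) ∧ 2 ≤ (b : ℕ) := by tauto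
      refine ⟨hab, ⟨a.val - 2, by omega⟩, ⟨b.val - 2, by omega⟩, ?_, ?_, ?_⟩
      · intro h'
        simp only [Fin.mk.injEq] at h'
        exact hab (Fin.ext (by omega))
      · exact Fin.ext (by simp; omega)
      · exact Fin.ext (by simp; omega)
    · rintro ⟨-, u, v, huv, rfl, rfl⟩
      exact ⟨fun h => huv (hg h), Or.inl ⟨by simp, by simp⟩⟩
  rw [hiso, myEdgeSetMap, Set.ncard_image_of_injective _ (Sym2.map.injective g.injective),
    topEdgeSetNcard]

open SimpleGraph in
lemma ncardF0 (n : ℕ) (h9 : 9 ≤ n) :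
    (SimpleGraph.fromRel
        (fun (u v : Fin n) => (u : ℕ) = 1 ∨ (2 ≤ (u : ℕ) ∧ 2 ≤ (v : ℕ)))).edgeSet.ncard
      = (n - 2).choose 2 + (n - 1) := by
  set one : Fin n := ⟨1, by omega⟩ with hone
  set S : Set (Sym2 (Fin n)) := (fun w => s(one, w)) '' {w : Fin n | w ≠ one} with hS
  have hSmem : ∀ a b : Fin n, (s(a, b) ∈ S ↔ (a = one ∧ b ≠ one) ∨ (b = one ∧ a ≠ one)) := by
    intro a b
    constructor
    · rintro ⟨w, hw, hsym⟩
      rcases Sym2.eq_iff.mp hsym with ⟨h1, h2⟩ | ⟨h1, h2⟩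
      · exact Or.inl ⟨h1.symm, h2 ▸ hw⟩
      · exact Or.inr ⟨h1.symm, h2 ▸ hw⟩
    · rintro (⟨rfl, hb⟩ | ⟨rfl, ha⟩)
      · exact ⟨b, hb, rfl⟩
      · exact ⟨a, ha, Sym2.eq_swap⟩
  have hsplit : (SimpleGraph.fromRel
        (fun (u v : Fin n) => (u : ℕ) = 1 ∨ (2 ≤ (u : ℕ) ∧ 2 ≤ (v : ℕ)))).edgeSet
      = (SimpleGraph.fromRel (fun (u v : Fin n) => 2 ≤ (u : ℕ) ∧ 2 ≤ (v : ℕ))).edgeSet ∪ S := by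
    have hv : (one : ℕ) = 1 := rfl
    ext e
    induction e using Sym2.ind with
    | _ a b =>
      simp only [SimpleGraph.mem_edgeSet, SimpleGraph.fromRel_adj, Set.mem_union, hSmem,
        ne_eq, Fin.ext_iff, hv]
      omega
  have hdisj : Disjoint
      (SimpleGraph.fromRel (fun (u v : Fin n) => 2 ≤ (u : ℕ) ∧ 2 ≤ (v : ℕ))).edgeSet S := by
    have hv : (one : ℕ) = 1 := rfl
    rw [Set.disjoint_left]
    intro e he heS
    induction e using Sym2.ind with
    | _ a b =>
      rw [SimpleGraph.mem_edgeSet, SimpleGraph.fromRel_adj] at he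
      rcases (hSmem a b).mp heS with ⟨rfl, _⟩ | ⟨rfl, _⟩ <;>
        rcases he.2 with ⟨h1, h2⟩ | ⟨h1, h2⟩ <;> omega
  have hSn : S.ncard = n - 1 := by
    rw [hS, Set.ncard_image_of_injective _ (fun x y h => Sym2.congr_right.mp h)]
    have : {w : Fin n | w ≠ one} = Set.univ \ {one} := by ext w; simp
    rw [this, Set.ncard_diff_singleton_of_mem (Set.mem_univ one), Set.ncard_univ, Nat.card_eq_fintype_card, Fintype.card_fin]
  rw [hsplit, Set.ncard_union_eq hdisj (Set.toFinite _) (Set.toFinite _), ncardK n h9, hSn]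

/-- For every `n ≥ 9` and `3 ≤ c < n/2`, the `c`-edge-coloured multigraph
on `Fin n` obtained from a rainbow complete `c`-edge-coloured multigraph on the `n - 2`
vertices `A = {2, …, n-1}` by adding the two vertices `0 = x` and `1 = y` together with, all
in the fixed colour `0`, the edge `xy` and an edge from `y` to every vertex of `A`, is
connected, has exactly `c·(n-2 choose 2) + n - 1` edges, and has no proper Hamiltonian
path. -/
theorem stmt18 {n c : ℕ} (h9 : 9 ≤ n) (hc : 3 ≤ c) (hcn : 2 * c < n) :
    ∀ G : Fin c → SimpleGraph (Fin n),
      G = (fun (i : Fin c) => if (i : ℕ) = 0 then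
              SimpleGraph.fromRel (fun (u v : Fin n) => (u : ℕ) = 1 ∨ (2 ≤ (u : ℕ) ∧ 2 ≤ (v : ℕ)))
            else
              SimpleGraph.fromRel (fun (u v : Fin n) => 2 ≤ (u : ℕ) ∧ 2 ≤ (v : ℕ))) →
      (⨆ i, G i).Connected ∧
      numEdges G = c * (n - 2).choose 2 + n - 1 ∧
      ¬ HasProperHamPath G := by
  intro G hG
  have hGeq : ∀ j : Fin c, G j = if (j : ℕ) = 0 then
      SimpleGraph.fromRel (fun (u v : Fin n) => (u : ℕ) = 1 ∨ (2 ≤ (u : ℕ) ∧ 2 ≤ (v : ℕ)))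
    else
      SimpleGraph.fromRel (fun (u v : Fin n) => 2 ≤ (u : ℕ) ∧ 2 ≤ (v : ℕ)) := by
    intro j; rw [hG]
  set one : Fin n := ⟨1, by omega⟩ with hone
  set c0 : Fin c := ⟨0, by omega⟩ with hc0
  have hG0 : G c0 = SimpleGraph.fromRel
      (fun (u v : Fin n) => (u : ℕ) = 1 ∨ (2 ≤ (u : ℕ) ∧ 2 ≤ (v : ℕ))) := by
    rw [hGeq c0]; rfl
  refine ⟨?_, ?_, ?_⟩
  · -- connected
    have hA : ∀ z : Fin n, z ≠ one → (G c0).Adj one z := by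
      intro z hz
      rw [hG0, SimpleGraph.fromRel_adj]
      exact ⟨fun h => hz h.symm, Or.inl (Or.inl rfl)⟩
    have hreach : ∀ z : Fin n, (⨆ i, G i).Reachable one z := by
      intro z
      by_cases hz : z = one
      · rw [hz]
      · exact SimpleGraph.Adj.reachable (SimpleGraph.iSup_adj.mpr ⟨c0, hA z hz⟩)
    rw [SimpleGraph.connected_iff]
    exact ⟨fun u v => (hreach u).symm.trans (hreach v), ⟨one⟩⟩
  · -- edge count
    have hval : ∀ i : Fin c, (G i).edgeSet.ncard =
        if (i : ℕ) = 0 then (n - 2).choose 2 + (n - 1) else (n - 2).choose 2 := by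
      intro i
      by_cases hi : (i : ℕ) = 0
      · rw [if_pos hi, hGeq i, if_pos hi, ncardF0 n h9]
      · rw [if_neg hi, hGeq i, if_neg hi, ncardK n h9]
    rw [numEdges, Finset.sum_congr rfl (fun i _ => hval i)]
    rw [Finset.sum_ite, Finset.sum_const, Finset.sum_const]
    have h1 : Finset.filter (fun i : Fin c => (i : ℕ) = 0) Finset.univ = {c0} := by
      ext i
      simp only [Finset.mem_filter, Finset.mem_univ, true_and, Finset.mem_singleton, Fin.ext_iff,
        hc0]
    have h2 : (Finset.filter (fun i : Fin c => ¬(i : ℕ) = 0) Finset.univ).card = c - 1 := by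
      rw [Finset.filter_not, Finset.card_sdiff_of_subset (Finset.filter_subset _ _), h1]
      simp
    rw [h1, h2]
    simp only [Finset.card_singleton, smul_eq_mul, one_mul]
    have hmul : (c - 1) * (n - 2).choose 2 + (n - 2).choose 2 = c * (n - 2).choose 2 := by
      cases c with
      | zero => omega
      | succ c' => simp [Nat.succ_sub_one, Nat.succ_mul]
    rw [Nat.add_sub_assoc (by omega : 1 ≤ n)]
    omega
  · -- no proper Hamiltonian path
    rintro ⟨v, κ, ⟨hinj, hadjE, hcol⟩, hsurj⟩
    simp only [Fintype.card_fin] at hinj hadjE hcol hsurj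
    have hzero : ∀ (j : Fin c) (a b : Fin n), (G j).Adj a b → (a : ℕ) = 0 →
        (b : ℕ) = 1 ∧ (j : ℕ) = 0 := by
      intro j a b hadj ha
      rw [hGeq j] at hadj
      by_cases hj : (j : ℕ) = 0
      · rw [if_pos hj, SimpleGraph.fromRel_adj] at hadj
        refine ⟨?_, hj⟩
        rcases hadj.2 with (h | ⟨h, _⟩) | (h | ⟨_, h⟩) <;> omega
      · rw [if_neg hj, SimpleGraph.fromRel_adj] at hadj
        rcases hadj.2 with ⟨h, _⟩ | ⟨_, h⟩ <;> omega
    have hone1 : ∀ (j : Fin c) (a b : Fin n), (G j).Adj a b →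
        ((a : ℕ) = 1 ∨ (b : ℕ) = 1) → (j : ℕ) = 0 := by
      intro j a b hadj h1
      by_contra hj
      rw [hGeq j, if_neg hj, SimpleGraph.fromRel_adj] at hadj
      rcases hadj.2 with ⟨ha, hb⟩ | ⟨hb, ha⟩ <;> omega
    obtain ⟨i, hi, hvi⟩ := hsurj ⟨0, by omega⟩
    have hvi0 : (v i : ℕ) = 0 := by rw [hvi]
    rcases Nat.lt_trichotomy 0 i with hpos | h0 | h0
    · rcases Nat.lt_or_ge (i + 1) n with hlt | hge
      · -- 0 < i, i + 1 < n : middle, contradiction with injectivity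
        have e1 := hadjE (i - 1) (by omega)
        rw [show i - 1 + 1 = i from by omega] at e1
        have h1 := hzero _ _ _ e1.symm hvi0
        have e2 := hadjE i (by omega)
        have h2 := hzero _ _ _ e2 hvi0
        have hvv : v (i - 1) = v (i + 1) := Fin.ext (by omega)
        have := hinj (Set.mem_Iio.mpr (by omega : i - 1 < n)) (Set.mem_Iio.mpr hlt) hvv
        omega
      · -- i = n - 1
        have hieq : i = n - 1 := by omega
        subst hieq
        have e1 := hadjE (n - 2) (by omega)
        rw [show n - 2 + 1 = n - 1 from by omega] at e1
        have h1 := hzero _ _ _ e1.symm hvi0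
        have e2 := hadjE (n - 3) (by omega)
        rw [show n - 3 + 1 = n - 2 from by omega] at e2
        have h2 := hone1 _ _ _ e2 (Or.inr h1.1)
        have := hcol (n - 3) (by omega)
        rw [show n - 3 + 1 = n - 2 from by omega] at this
        exact this (Fin.ext (by omega))
    · -- i = 0
      subst h0
      have e1 := hadjE 0 (by omega)
      have h1 := hzero _ _ _ e1 hvi0
      have e2 := hadjE 1 (by omega)
      have h2 := hone1 _ _ _ e2 (Or.inl h1.1)
      have h3 := hcol 0 (by omega)
      norm_num at h3
      exact h3 (Fin.ext (by omega))
    · omega
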